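/- For the Gerber–Dickson risk process, the ultimate ruin probability satisfies, for every nonnegative integer u, the recursive equation ψ(u) = ∑_{k=0}^{u} ψ(u+1−k)·f(k) + F̄(u), where F̄(u) = P(Y > u). -/

import Mathlib

open MeasureTheory ProbabilityTheory

section Aux

variable {Ω : Type*} [MeasurableSpace Ω] (P : Measure Ω) [IsProbabilityMeasure P]
  (Y : ℕ → Ω → ℕ)

/-- Independence over a reindexed finite intersection. -/
lemma aux_meas_biInter (hindep : iIndepFun Y P)
    (hident : ∀ j, IdentDistrib (Y j) (Y 0) P P)
    (σ : ℕ → ℕ) (hσ : Function.Injective σ) (t : Finset ℕ) (B : ℕ → Set ℕ) :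
    P (⋂ i ∈ t, Y (σ i) ⁻¹' B i) = ∏ i ∈ t, P (Y 0 ⁻¹' B i) := by
  classical
  set g : ℕ → Set ℕ := fun j =>
    if h : ∃ i ∈ t, σ i = j then B h.choose else Set.univ with hg
  have hgσ : ∀ i ∈ t, g (σ i) = B i := by
    intro i hi
    have h : ∃ i' ∈ t, σ i' = σ i := ⟨i, hi, rfl⟩
    have h1 : h.choose ∈ t ∧ σ h.choose = σ i := ⟨h.choose_spec.1, h.choose_spec.2⟩
    have : h.choose = i := hσ h1.2
    simp only [hg, dif_pos h, this]
  have hset : (⋂ i ∈ t, Y (σ i) ⁻¹' B i) = ⋂ j ∈ t.image σ, Y j ⁻¹' g j := by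
    ext ω
    simp only [Set.mem_iInter, Finset.mem_image]
    constructor
    · rintro h j ⟨i, hi, rfl⟩
      rw [hgσ i hi]; exact h i hi
    · intro h i hi
      have := h (σ i) ⟨i, hi, rfl⟩
      rwa [hgσ i hi] at this
  rw [hset, hindep.meas_biInter (fun j _ => ⟨g j, trivial, rfl⟩),
    Finset.prod_image (fun i _ j _ h => hσ h)]
  exact Finset.prod_congr rfl fun i hi => by
    rw [hgσ i hi]; exact (hident (σ i)).measure_mem_eq trivial

/-- The measure of a point-preimage of the restricted sequence only depends on the law of `Y 0`. -/
lemma aux_point (hYmeas : ∀ j, Measurable (Y j))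
    (hindep : iIndepFun Y P)
    (hident : ∀ j, IdentDistrib (Y j) (Y 0) P P)
    (σ : ℕ → ℕ) (hσ : Function.Injective σ) (t : Finset ℕ) (x : ∀ i : t, ℕ) :
    P ((fun ω => t.restrict (fun j => Y (σ j) ω)) ⁻¹' {x}) =
      ∏ i ∈ t, P (Y 0 ⁻¹' (if h : i ∈ t then {x ⟨i, h⟩} else Set.univ)) := by
  classical
  have hset : ((fun ω => t.restrict (fun j => Y (σ j) ω)) ⁻¹' {x})
      = ⋂ i ∈ t, Y (σ i) ⁻¹' (if h : i ∈ t then {x ⟨i, h⟩} else Set.univ) := by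
    ext ω
    simp only [Set.mem_preimage, Set.mem_singleton_iff, funext_iff, Set.mem_iInter,
      Finset.restrict_def]
    constructor
    · intro h i hi
      simp only [dif_pos hi, Set.mem_preimage, Set.mem_singleton_iff]
      exact h ⟨i, hi⟩
    · intro h i
      have := h i.1 i.2
      simpa only [dif_pos i.2, Set.mem_preimage, Set.mem_singleton_iff] using this
  rw [hset]
  exact aux_meas_biInter P Y hindep hident σ hσ t _

/-- The laws of the sequence and of the shifted sequence coincide. -/
lemma aux_map_eq (hYmeas : ∀ j, Measurable (Y j))
    (hindep : iIndepFun Y P)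
    (hident : ∀ j, IdentDistrib (Y j) (Y 0) P P) :
    P.map (fun ω j => Y j ω) = P.map (fun ω j => Y (j + 1) ω) := by
  classical
  have hmeas1 : Measurable (fun ω j => Y j ω) :=
    measurable_pi_lambda _ fun j => hYmeas j
  have hmeas2 : Measurable (fun ω j => Y (j + 1) ω) :=
    measurable_pi_lambda _ fun j => hYmeas (j + 1)
  have : IsProbabilityMeasure (P.map (fun ω j => Y j ω)) :=
    Measure.isProbabilityMeasure_map hmeas1.aemeasurable
  have : IsProbabilityMeasure (P.map (fun ω j => Y (j + 1) ω)) :=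
    Measure.isProbabilityMeasure_map hmeas2.aemeasurable
  refine ext_of_generate_finite _ generateFrom_measurableCylinders.symm
    isPiSystem_measurableCylinders (fun s hs => ?_) (by simp)
  obtain ⟨t, S, hS, rfl⟩ := (mem_measurableCylinders _).1 hs
  have key : ∀ (σ : ℕ → ℕ), Function.Injective σ →
      P.map (fun ω j => Y (σ j) ω) (cylinder t S) =
        ∑' x : S, ∏ i ∈ t,
          P (Y 0 ⁻¹' (if h : i ∈ t then {(x : ∀ i : t, ℕ) ⟨i, h⟩} else Set.univ)) := by
    intro σ hσ
    have hmeasσ : Measurable (fun ω j => Y (σ j) ω) :=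
      measurable_pi_lambda _ fun j => hYmeas (σ j)
    rw [Measure.map_apply hmeasσ (hS.cylinder t)]
    have hpre : (fun ω j => Y (σ j) ω) ⁻¹' cylinder t S
        = (fun ω => t.restrict (fun j => Y (σ j) ω)) ⁻¹' S := rfl
    rw [hpre]
    have hrm : Measurable (fun ω => t.restrict (fun j => Y (σ j) ω)) :=
      measurable_pi_lambda _ fun i => hYmeas (σ i)
    rw [← tsum_measure_preimage_singleton S.to_countable
      (fun y _ => hrm (measurableSet_singleton y))]
    exact tsum_congr fun x => aux_point P Y hYmeas hindep hident σ hσ t x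
  exact (key id Function.injective_id).trans (key (· + 1) (fun a b h => by simpa using h)).symm

end Aux

/-- For the Gerber–Dickson risk process, the ultimate ruin probability satisfies
`ψ(u) = ∑_{k=0}^{u} ψ(u+1−k)·f(k) + F̄(u)` for every `u : ℕ`. -/
theorem stmt_0
    {Ω : Type*} [MeasurableSpace Ω] (P : Measure Ω) [IsProbabilityMeasure P]
    (Y : ℕ → Ω → ℕ) (hYmeas : ∀ j, Measurable (Y j))
    (hindep : iIndepFun Y P)
    (hident : ∀ j, IdentDistrib (Y j) (Y 0) P P)
    (f Fbar : ℕ → ℝ)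
    (hf : ∀ y, (P {ω | Y 0 ω = y}).toReal = f y)
    (hFbar : ∀ y, (P {ω | y < Y 0 ω}).toReal = Fbar y)
    (hsummable : Summable (fun y : ℕ => (y : ℝ) * f y))
    (hnet : ∑' y : ℕ, (y : ℝ) * f y < 1)
    (ψ : ℕ → ℝ)
    (hψ : ∀ u : ℕ, ψ u = (P {ω | ∃ t : ℕ, 1 ≤ t ∧
        (u : ℤ) + t - ∑ j ∈ Finset.range t, (Y j ω : ℤ) ≤ 0}).toReal) :
    ∀ u : ℕ, ψ u = (∑ k ∈ Finset.range (u + 1), ψ (u + 1 - k) * f k) + Fbar u := by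
  classical
  -- the ruin set in sequence space
  set S : ℕ → Set (ℕ → ℕ) := fun v =>
    {y | ∃ t : ℕ, 1 ≤ t ∧ (v : ℤ) + t - ∑ j ∈ Finset.range t, (y j : ℤ) ≤ 0} with hSdef
  have hSmeas : ∀ v, MeasurableSet (S v) := by
    intro v
    have : S v = ⋃ t : ℕ, ⋃ _ : 1 ≤ t,
        {y : ℕ → ℕ | (v : ℤ) + t - ∑ j ∈ Finset.range t, (y j : ℤ) ≤ 0} := by
      ext y; simp [hSdef]
    rw [this]
    refine MeasurableSet.iUnion fun t => MeasurableSet.iUnion fun _ => ?_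
    have hmeas : Measurable (fun y : ℕ → ℕ =>
        (v : ℤ) + t - ∑ j ∈ Finset.range t, (y j : ℤ)) := by
      apply Measurable.sub measurable_const
      exact Finset.measurable_sum _ fun j _ =>
        (measurable_from_top (f := fun n : ℕ => (n : ℤ))).comp (measurable_pi_apply j)
    exact hmeas (MeasurableSpace.measurableSet_top (s := {z : ℤ | z ≤ 0}))
  -- the shifted ruin event
  set Bsh : ℕ → Set Ω := fun v =>
    {ω | ∃ t : ℕ, 1 ≤ t ∧ (v : ℤ) + t - ∑ j ∈ Finset.range t, (Y (j + 1) ω : ℤ) ≤ 0}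
    with hBdef
  have hBpre : ∀ v, Bsh v = (fun ω j => Y (j + 1) ω) ⁻¹' S v := fun v => rfl
  have hApre : ∀ v : ℕ, {ω | ∃ t : ℕ, 1 ≤ t ∧
      (v : ℤ) + t - ∑ j ∈ Finset.range t, (Y j ω : ℤ) ≤ 0}
      = (fun ω j => Y j ω) ⁻¹' S v := fun v => rfl
  have hmeas1 : Measurable (fun ω j => Y j ω) := measurable_pi_lambda _ fun j => hYmeas j
  have hmeas2 : Measurable (fun ω j => Y (j + 1) ω) :=
    measurable_pi_lambda _ fun j => hYmeas (j + 1)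
  -- ψ in terms of the shifted event
  have hψ' : ∀ v : ℕ, ψ v = (P (Bsh v)).toReal := by
    intro v
    rw [hψ v]
    congr 1
    rw [hApre v, hBpre v, ← Measure.map_apply hmeas1 (hSmeas v),
      ← Measure.map_apply hmeas2 (hSmeas v),
      aux_map_eq P Y hYmeas hindep hident]
  -- measurability of Bsh (w.r.t. the σ-algebra generated by the shifted sequence, and ambient)
  have hBshm' : ∀ v, MeasurableSet[⨆ j ∈ {i : ℕ | i ≠ 0}, MeasurableSpace.comap (Y j) inferInstance] (Bsh v) := by
    intro v
    have hY' : ∀ j : ℕ, Measurable[⨆ j ∈ {i : ℕ | i ≠ 0}, MeasurableSpace.comap (Y j) inferInstance] (Y (j + 1)) := by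
      intro j
      rw [measurable_iff_comap_le]
      exact le_iSup₂ (f := fun i (_ : i ∈ {i : ℕ | i ≠ 0}) =>
        MeasurableSpace.comap (Y i) inferInstance) (j + 1) (Nat.succ_ne_zero j)
    have : Bsh v = ⋃ t : ℕ, ⋃ _ : 1 ≤ t,
        {ω | (v : ℤ) + t - ∑ j ∈ Finset.range t, (Y (j + 1) ω : ℤ) ≤ 0} := by
      ext ω; simp [hBdef]
    rw [this]
    refine MeasurableSet.iUnion fun t => MeasurableSet.iUnion fun _ => ?_
    have hmeas : Measurable[⨆ j ∈ {i : ℕ | i ≠ 0}, MeasurableSpace.comap (Y j) inferInstance] (fun ω =>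
        (v : ℤ) + t - ∑ j ∈ Finset.range t, (Y (j + 1) ω : ℤ)) := by
      apply Measurable.sub measurable_const
      exact Finset.measurable_sum _ fun j _ =>
        (measurable_from_top (f := fun n : ℕ => (n : ℤ))).comp (hY' j)
    exact hmeas (MeasurableSpace.measurableSet_top (s := {z : ℤ | z ≤ 0}))
  have hBshMeas : ∀ v, MeasurableSet (Bsh v) := by
    intro v
    exact (iSup₂_le fun j _ => (hYmeas j).comap_le :
      (⨆ j ∈ {i : ℕ | i ≠ 0}, MeasurableSpace.comap (Y j) inferInstance) ≤ _) _ (hBshm' v)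
  -- independence of {Y 0 = k} and Bsh v
  have hindepkey : ∀ (k v : ℕ),
      P ({ω | Y 0 ω = k} ∩ Bsh v) = P {ω | Y 0 ω = k} * P (Bsh v) := by
    intro k v
    have hInd : Indep (⨆ i ∈ ({0} : Set ℕ), MeasurableSpace.comap (Y i) inferInstance)
        (⨆ j ∈ {i : ℕ | i ≠ 0}, MeasurableSpace.comap (Y j) inferInstance) P :=
      indep_iSup_of_disjoint (fun i => (hYmeas i).comap_le) hindep.iIndep
        (by simp [Set.disjoint_left])
    have h0le : MeasurableSpace.comap (Y 0) inferInstance ≤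
        ⨆ i ∈ ({0} : Set ℕ), MeasurableSpace.comap (Y i) inferInstance :=
      le_iSup₂ (f := fun i (_ : i ∈ ({0} : Set ℕ)) =>
        MeasurableSpace.comap (Y i) inferInstance) 0 rfl
    have h1 : MeasurableSet[⨆ i ∈ ({0} : Set ℕ),
        MeasurableSpace.comap (Y i) inferInstance] {ω | Y 0 ω = k} :=
      h0le _ ⟨{k}, trivial, rfl⟩
    exact (Indep_iff _ _ _).1 hInd _ _ h1 (hBshm' v)
  -- main decomposition
  intro u
  set A : Set Ω := {ω | ∃ t : ℕ, 1 ≤ t ∧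
      (u : ℤ) + t - ∑ j ∈ Finset.range t, (Y j ω : ℤ) ≤ 0} with hAdef
  have hsplit : A = (⋃ k ∈ Finset.range (u + 1), ({ω | Y 0 ω = k} ∩ Bsh (u + 1 - k)))
      ∪ {ω | u < Y 0 ω} := by
    ext ω
    simp only [hAdef, Set.mem_union, Set.mem_iUnion, Set.mem_inter_iff, Set.mem_setOf_eq,
      Finset.mem_range, hBdef]
    constructor
    · rintro ⟨t, ht, hle⟩
      by_cases hku : u < Y 0 ω
      · exact Or.inr hku
      push_neg at hku
      left
      refine ⟨Y 0 ω, by omega, rfl, ?_⟩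
      obtain ⟨s, rfl⟩ : ∃ s, t = s + 1 := ⟨t - 1, by omega⟩
      rcases s with _ | s
      · exfalso
        simp only [zero_add, Finset.sum_range_one, Nat.cast_one] at hle
        have : (Y 0 ω : ℤ) ≤ (u : ℤ) := by exact_mod_cast hku
        omega
      · refine ⟨s + 1, by omega, ?_⟩
        have hsum : ∑ j ∈ Finset.range (s + 1 + 1), (Y j ω : ℤ)
            = (∑ j ∈ Finset.range (s + 1), (Y (j + 1) ω : ℤ)) + (Y 0 ω : ℤ) := by
          rw [Finset.sum_range_succ']
        rw [hsum] at hle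
        have hcast : ((u + 1 - Y 0 ω : ℕ) : ℤ) = (u : ℤ) + 1 - (Y 0 ω : ℤ) := by
          have : Y 0 ω ≤ u + 1 := by omega
          push_cast [Nat.cast_sub this]
          ring
        rw [hcast]
        push_cast at hle ⊢
        omega
    · rintro (⟨k, hk, hYk, s, hs, hle⟩ | hku)
      · refine ⟨s + 1, by omega, ?_⟩
        have hsum : ∑ j ∈ Finset.range (s + 1), (Y j ω : ℤ)
            = (∑ j ∈ Finset.range s, (Y (j + 1) ω : ℤ)) + (Y 0 ω : ℤ) := by
          rw [Finset.sum_range_succ']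
        rw [hsum, hYk]
        have hcast : ((u + 1 - k : ℕ) : ℤ) = (u : ℤ) + 1 - (k : ℤ) := by
          have : k ≤ u + 1 := by omega
          push_cast [Nat.cast_sub this]
          ring
        rw [hcast] at hle
        push_cast at hle ⊢
        omega
      · refine ⟨1, le_refl 1, ?_⟩
        simp only [Finset.sum_range_one]
        have : (u : ℤ) < (Y 0 ω : ℤ) := by exact_mod_cast hku
        omega
  -- measures
  have hY0k : ∀ k : ℕ, MeasurableSet {ω | Y 0 ω = k} := fun k =>
    hYmeas 0 (MeasurableSpace.measurableSet_top (s := {n : ℕ | n = k}))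
  have hY0gt : MeasurableSet {ω | u < Y 0 ω} :=
    hYmeas 0 (MeasurableSpace.measurableSet_top (s := {n : ℕ | u < n}))
  have hdisj2 : Disjoint (⋃ k ∈ Finset.range (u + 1), ({ω | Y 0 ω = k} ∩ Bsh (u + 1 - k)))
      {ω | u < Y 0 ω} := by
    rw [Set.disjoint_left]
    rintro ω hω hω'
    simp only [Set.mem_iUnion, Set.mem_inter_iff, Set.mem_setOf_eq, Finset.mem_range] at hω hω'
    obtain ⟨k, hk, hYk, -⟩ := hω
    omega
  have hPA : P A = (∑ k ∈ Finset.range (u + 1), P ({ω | Y 0 ω = k} ∩ Bsh (u + 1 - k)))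
      + P {ω | u < Y 0 ω} := by
    rw [hsplit, measure_union hdisj2 hY0gt,
      measure_biUnion_finset ?hd (fun k _ => (hY0k k).inter (hBshMeas _))]
    case hd =>
      intro a ha b hb hab
      simp only [Function.onFun]
      rw [Set.disjoint_left]
      rintro ω ⟨ha1, -⟩ ⟨hb1, -⟩
      exact hab (ha1.symm.trans hb1)
  -- pass to real numbers
  have hne : ∀ s : Set Ω, P s ≠ ⊤ := fun s => measure_ne_top P s
  rw [hψ u]
  have hAeq : {ω | ∃ t : ℕ, 1 ≤ t ∧
      (u : ℤ) + t - ∑ j ∈ Finset.range t, (Y j ω : ℤ) ≤ 0} = A := rfl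
  rw [hAeq, hPA, ENNReal.toReal_add (ENNReal.sum_ne_top.2 fun k _ => hne _) (hne _),
    ENNReal.toReal_sum (fun k _ => hne _)]
  congr 1
  · refine Finset.sum_congr rfl fun k hk => ?_
    rw [hindepkey k (u + 1 - k), ENNReal.toReal_mul, ← hf k, ← hψ' (u + 1 - k)]
    ring
  · exact hFbar u
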